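/- Polynomial Poincaré lemma for the curl: if v ∈ 𝐏_r is a vector field on ℝ³ with polynomial components of total degree at most r and ∇·v = 0 everywhere on ℝ³, then there exists a vector field q ∈ 𝐏_{r+1} with polynomial components of total degree at most r+1 such that v = ∇×q. -/

import Mathlib

open MeasureTheory

/-- Divergence of a vector field on ℝ³. -/
noncomputable def pdiv (v : (Fin 3 → ℝ) → (Fin 3 → ℝ)) (x : Fin 3 → ℝ) : ℝ :=
  ∑ i : Fin 3, fderiv ℝ (fun y => v y i) x (Pi.single i 1)

/-- Curl of a vector field on ℝ³. -/
noncomputable def pcurl (v : (Fin 3 → ℝ) → (Fin 3 → ℝ)) (x : Fin 3 → ℝ) : Fin 3 → ℝ :=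
  ![fderiv ℝ (fun y => v y 2) x (Pi.single 1 1) - fderiv ℝ (fun y => v y 1) x (Pi.single 2 1),
    fderiv ℝ (fun y => v y 0) x (Pi.single 2 1) - fderiv ℝ (fun y => v y 2) x (Pi.single 0 1),
    fderiv ℝ (fun y => v y 1) x (Pi.single 0 1) - fderiv ℝ (fun y => v y 0) x (Pi.single 1 1)]

/-- Gradient of a scalar field on ℝ³. -/
noncomputable def pgrad (p : (Fin 3 → ℝ) → ℝ) (x : Fin 3 → ℝ) : Fin 3 → ℝ :=
  fun i => fderiv ℝ p x (Pi.single i 1)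

/-- The Poincaré-type operator 𝔭: (𝔭u)(x) = (∫₀¹ t² u(tx) dt) x. -/
noncomputable def poin (u : (Fin 3 → ℝ) → ℝ) (x : Fin 3 → ℝ) : Fin 3 → ℝ :=
  (∫ t in (0:ℝ)..1, t ^ 2 * u (t • x)) • x

/-- `u` is a polynomial function of total degree at most `r` (P_r = {0} if r < 0). -/
def IsPolyDeg (r : ℤ) (u : (Fin 3 → ℝ) → ℝ) : Prop :=
  ∃ p : MvPolynomial (Fin 3) ℝ, (p = 0 ∨ (p.totalDegree : ℤ) ≤ r) ∧
    ∀ x, MvPolynomial.eval x p = u x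

/-- `v` is a vector field with polynomial components of total degree at most `r`. -/
def IsVecPolyDeg (r : ℤ) (v : (Fin 3 → ℝ) → (Fin 3 → ℝ)) : Prop :=
  ∀ i, IsPolyDeg r fun x => v x i

/-- `u` is a polynomial function. -/
def IsPolyFun (u : (Fin 3 → ℝ) → ℝ) : Prop :=
  ∃ p : MvPolynomial (Fin 3) ℝ, ∀ x, MvPolynomial.eval x p = u x

/-- Membership in S_k = {p ∈ (P̃_k)³ : x·p(x) = 0}. -/
def MemS (k : ℕ) (v : (Fin 3 → ℝ) → (Fin 3 → ℝ)) : Prop :=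
  (∀ i, ∃ p : MvPolynomial (Fin 3) ℝ, p.IsHomogeneous k ∧ ∀ x, MvPolynomial.eval x p = v x i) ∧
    ∀ x, ∑ i : Fin 3, x i * v x i = 0

/-- Membership in the first-family Nédélec space R_k = 𝐏_{k-1} ⊕ S_k. -/
def MemR (k : ℕ) (v : (Fin 3 → ℝ) → (Fin 3 → ℝ)) : Prop :=
  ∃ v₁ v₂, IsVecPolyDeg ((k : ℤ) - 1) v₁ ∧ MemS k v₂ ∧ v = v₁ + v₂

open MvPolynomial

namespace Stmt7Aux

abbrev MvP := MvPolynomial (Fin 3) ℝ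

noncomputable def L (p : MvP) (x : Fin 3 → ℝ) : (Fin 3 → ℝ) →L[ℝ] ℝ :=
  ∑ i : Fin 3, eval x (pderiv i p) • ContinuousLinearMap.proj i

lemma hasFDerivAt_eval (p : MvP) (x : Fin 3 → ℝ) :
    HasFDerivAt (fun y => eval y p) (L p x) x := by
  induction p using MvPolynomial.induction_on with
  | C a =>
      have h1 : (fun y : Fin 3 → ℝ => eval y (C a)) = fun _ => a := by
        funext y; simp
      have h2 : L (C a) x = 0 := by
        simp [L, pderiv_C]
      rw [h1, h2]
      exact hasFDerivAt_const a x
  | add p q hp hq =>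
      have h1 : (fun y : Fin 3 → ℝ => eval y (p + q))
          = fun y => eval y p + eval y q := by funext y; simp
      have h2 : L (p + q) x = L p x + L q x := by
        simp [L, add_smul, Finset.sum_add_distrib]
      rw [h1, h2]
      exact hp.add hq
  | mul_X p n hp =>
      have h1 : (fun y : Fin 3 → ℝ => eval y (p * X n))
          = fun y => eval y p * y n := by funext y; simp
      have hn : HasFDerivAt (fun y : Fin 3 → ℝ => y n)
          (ContinuousLinearMap.proj (R := ℝ) (φ := fun _ : Fin 3 => ℝ) n) x :=
        (ContinuousLinearMap.proj (R := ℝ) (φ := fun _ : Fin 3 => ℝ) n).hasFDerivAt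
      have h2 : L (p * X n) x
          = eval x p • (ContinuousLinearMap.proj n : (Fin 3 → ℝ) →L[ℝ] ℝ) + x n • L p x := by
        ext y
        classical
        simp only [L, ContinuousLinearMap.add_apply, ContinuousLinearMap.smul_apply,
          ContinuousLinearMap.sum_apply, ContinuousLinearMap.proj_apply, smul_eq_mul,
          pderiv_mul, map_add, eval_mul, eval_X, Pi.single_apply]
        rw [Fin.sum_univ_three, Fin.sum_univ_three]
        fin_cases n <;> simp <;> ring
      rw [h1, h2]
      exact hp.mul hn

end Stmt7Aux

namespace Stmt7Aux

lemma fderiv_eval (p : MvP) (x : Fin 3 → ℝ) (i : Fin 3) :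
    fderiv ℝ (fun y => eval y p) x (Pi.single i 1) = eval x (pderiv i p) := by
  classical
  rw [(hasFDerivAt_eval p x).fderiv]
  simp only [L, ContinuousLinearMap.sum_apply, ContinuousLinearMap.smul_apply,
    ContinuousLinearMap.proj_apply, smul_eq_mul, Pi.single_apply]
  rw [Fin.sum_univ_three]
  fin_cases i <;> simp

lemma degree_eq_sum (m : Fin 3 →₀ ℕ) : m.degree = m 0 + m 1 + m 2 := by
  classical
  have : m.degree = ∑ j : Fin 3, m j := by
    unfold Finsupp.degree
    exact Finset.sum_subset (Finset.subset_univ _)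
      (fun j _ hj => Finsupp.notMem_support_iff.mp hj)
  rw [this, Fin.sum_univ_three]

lemma euler_monomial (m : Fin 3 →₀ ℕ) (a : ℝ) :
    ∑ j : Fin 3, X j * pderiv j (monomial m a) = ((m.degree : ℝ)) • monomial m a := by
  classical
  have key : ∀ j : Fin 3, X j * pderiv j (monomial m a) = ((m j : ℕ)) • monomial m a := by
    intro j
    rw [pderiv_monomial]
    rcases Nat.eq_zero_or_pos (m j) with h | h
    · simp [h]
    · have hs : Finsupp.single j 1 + (m - Finsupp.single j 1) = m := by
        ext k
        rcases eq_or_ne k j with rfl | hk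
        · simp only [Finsupp.add_apply, Finsupp.tsub_apply, Finsupp.single_eq_same]
          omega
        · simp [Finsupp.single_eq_of_ne' (Ne.symm hk)]
      rw [X, monomial_mul, hs, one_mul, smul_monomial, nsmul_eq_mul]
      simp [mul_comm]
  calc ∑ j : Fin 3, X j * pderiv j (monomial m a)
      = ∑ j : Fin 3, ((m j : ℕ)) • monomial m a := Finset.sum_congr rfl (fun j _ => key j)
    _ = ((m.degree : ℝ)) • monomial m a := by
        rw [← Finset.sum_smul, degree_eq_sum, Fin.sum_univ_three, Nat.cast_smul_eq_nsmul]

lemma euler {p : MvP} {d : ℕ} (hp : p.IsHomogeneous d) :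
    ∑ j : Fin 3, X j * pderiv j p = ((d : ℝ)) • p := by
  classical
  conv_lhs => rw [← p.support_sum_monomial_coeff]
  conv_rhs => rw [← p.support_sum_monomial_coeff]
  rw [Finset.smul_sum]
  have hexp : ∀ j : Fin 3, X j * pderiv j (∑ v ∈ p.support, monomial v (coeff v p))
      = ∑ v ∈ p.support, X j * pderiv j (monomial v (coeff v p)) := by
    intro j; rw [map_sum, Finset.mul_sum]
  simp_rw [hexp]
  rw [Finset.sum_comm]
  refine Finset.sum_congr rfl fun v hv => ?_
  rw [euler_monomial]
  have hvd : v.degree = d := by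
    by_contra hne
    exact (mem_support_iff.mp hv) (hp.coeff_eq_zero hne)
  rw [hvd]

end Stmt7Aux

namespace Stmt7Aux

lemma hc_monomial (k : ℕ) (m : Fin 3 →₀ ℕ) (a : ℝ) :
    homogeneousComponent k (monomial m a) = if k = m.degree then monomial m a else 0 :=
  homogeneousComponent_of_mem ((mem_homogeneousSubmodule _ _).mpr
    (isHomogeneous_monomial a rfl))

lemma hc_pderiv (n : ℕ) (i : Fin 3) (p : MvP) :
    pderiv i (homogeneousComponent (n + 1) p) = homogeneousComponent n (pderiv i p) := by
  classical
  induction p using MvPolynomial.induction_on' with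
  | add p q hp hq => simp [map_add, hp, hq]
  | monomial m a =>
      rw [pderiv_monomial, hc_monomial, hc_monomial, apply_ite (pderiv i),
        pderiv_monomial, map_zero]
      rcases Nat.eq_zero_or_pos (m i) with h | h
      · simp [h]
      · have hdeg : (m - Finsupp.single i 1).degree = m.degree - 1 := by
          rw [degree_eq_sum, degree_eq_sum]
          simp only [Finsupp.tsub_apply, Finsupp.single_apply]
          fin_cases i <;> simp_all <;> omega
        have hge : 1 ≤ m.degree := by
          rw [degree_eq_sum]; fin_cases i <;> simp_all <;> omega
        by_cases hcase : n + 1 = m.degree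
        · rw [if_pos hcase, if_pos (by omega)]
        · rw [if_neg hcase, if_neg (by omega)]

lemma curl_cross (d : ℕ) (w : Fin 3 → MvP)
    (hw : ∀ j, (w j).IsHomogeneous d)
    (hdiv : pderiv 0 (w 0) + pderiv 1 (w 1) + pderiv 2 (w 2) = 0) :
    (pderiv 1 (X 0 * w 1 - X 1 * w 0) - pderiv 2 (X 2 * w 0 - X 0 * w 2)
        = (-((d : ℝ) + 2)) • w 0)
  ∧ (pderiv 2 (X 1 * w 2 - X 2 * w 1) - pderiv 0 (X 0 * w 1 - X 1 * w 0)
        = (-((d : ℝ) + 2)) • w 1)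
  ∧ (pderiv 0 (X 2 * w 0 - X 0 * w 2) - pderiv 1 (X 1 * w 2 - X 2 * w 1)
        = (-((d : ℝ) + 2)) • w 2) := by
  have heuler : ∀ j, X 0 * pderiv 0 (w j) + X 1 * pderiv 1 (w j) + X 2 * pderiv 2 (w j)
      = C ((d : ℝ)) * w j := by
    intro j
    have := euler (hw j)
    rw [Fin.sum_univ_three] at this
    rw [this, smul_eq_C_mul]
  have hps : ∀ j k : Fin 3, j ≠ k → pderiv k (X j : MvP) = 0 := fun j k h => pderiv_X_of_ne h
  refine ⟨?_, ?_, ?_⟩ <;>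
  · rw [smul_eq_C_mul]
    simp only [map_sub, pderiv_mul, pderiv_X_self, one_mul, map_neg, map_add, map_ofNat,
      hps 0 1 (by decide), hps 1 0 (by decide), hps 0 2 (by decide), hps 2 0 (by decide),
      hps 1 2 (by decide), hps 2 1 (by decide), zero_mul, sub_zero, zero_sub, add_zero, zero_add]
    first
    | linear_combination (X 0 : MvP) * hdiv - heuler 0
    | linear_combination (X 1 : MvP) * hdiv - heuler 1
    | linear_combination (X 2 : MvP) * hdiv - heuler 2

end Stmt7Aux

open Stmt7Aux

/-- polynomial Poincaré lemma for the curl. -/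
theorem stmt_7 (r : ℕ) (v : (Fin 3 → ℝ) → (Fin 3 → ℝ)) (hv : IsVecPolyDeg (r : ℤ) v)
    (hdiv : ∀ x, pdiv v x = 0) :
    ∃ q : (Fin 3 → ℝ) → (Fin 3 → ℝ), IsVecPolyDeg ((r : ℤ) + 1) q ∧ ∀ x, v x = pcurl q x := by
  classical
  choose pv hpv using hv
  have hfun : ∀ i, (fun y => v y i) = fun y : Fin 3 → ℝ => eval y (pv i) :=
    fun i => funext fun y => ((hpv i).2 y).symm
  have hdeg : ∀ i, (pv i).totalDegree ≤ r := by
    intro i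
    rcases (hpv i).1 with h | h
    · simp [h]
    · exact_mod_cast h
  have hdivp : pderiv 0 (pv 0) + pderiv 1 (pv 1) + pderiv 2 (pv 2) = 0 := by
    apply MvPolynomial.funext
    intro x
    have h := hdiv x
    simp only [pdiv, Fin.sum_univ_three, hfun 0, hfun 1, hfun 2, fderiv_eval] at h
    simp [h]
  set w : ℕ → Fin 3 → MvP := fun d i => homogeneousComponent d (pv i) with hwdef
  have hdivd : ∀ d, pderiv 0 (w d 0) + pderiv 1 (w d 1) + pderiv 2 (w d 2) = 0 := by
    intro d
    cases d with
    | zero => simp [hwdef, homogeneousComponent_zero, pderiv_C]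
    | succ d =>
        simp only [hwdef]
        rw [hc_pderiv, hc_pderiv, hc_pderiv, ← map_add, ← map_add, hdivp, map_zero]
  have hcc := fun d => curl_cross d (w d)
    (fun i => homogeneousComponent_isHomogeneous d (pv i)) (hdivd d)
  set co : ℕ → ℝ := fun d => -(((d : ℝ) + 2)⁻¹) with hco
  set qp : Fin 3 → MvP :=
    ![∑ d ∈ Finset.range (r + 1), co d • (X 1 * w d 2 - X 2 * w d 1),
      ∑ d ∈ Finset.range (r + 1), co d • (X 2 * w d 0 - X 0 * w d 2),
      ∑ d ∈ Finset.range (r + 1), co d • (X 0 * w d 1 - X 1 * w d 0)] with hqp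
  have hsum : ∀ i, ∑ d ∈ Finset.range (r + 1), w d i = pv i := by
    intro i
    rw [← sum_homogeneousComponent (pv i)]
    exact (Finset.sum_subset (Finset.range_subset_range.mpr (by have := hdeg i; omega))
      (fun d _ hd => homogeneousComponent_eq_zero d (pv i)
        (by simp only [Finset.mem_range, not_lt] at hd; omega))).symm
  have hpd : ∀ (j : Fin 3) (f : ℕ → MvP),
      pderiv j (∑ d ∈ Finset.range (r + 1), co d • f d)
        = ∑ d ∈ Finset.range (r + 1), co d • pderiv j (f d) := by
    intro j f
    rw [map_sum]
    exact Finset.sum_congr rfl fun d _ => by rw [Derivation.map_smul]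
  have hone : ∀ (d : ℕ) (p : MvP), co d • ((-((d : ℝ) + 2)) • p) = p := by
    intro d p
    rw [smul_smul]
    have h2 : ((d : ℝ) + 2) ≠ 0 := by positivity
    have hmul : co d * (-((d : ℝ) + 2)) = 1 := by
      rw [hco]; field_simp
    rw [hmul, one_smul]
  have hcurl0 : pderiv 1 (qp 2) - pderiv 2 (qp 1) = pv 0 := by
    simp only [hqp, Matrix.cons_val_two, Matrix.cons_val_one, Matrix.head_cons, Matrix.tail_cons,
      Matrix.cons_val_zero]
    rw [hpd, hpd, ← Finset.sum_sub_distrib, ← hsum 0]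
    refine Finset.sum_congr rfl fun d _ => ?_
    rw [← smul_sub, (hcc d).1, hone]
  have hcurl1 : pderiv 2 (qp 0) - pderiv 0 (qp 2) = pv 1 := by
    simp only [hqp, Matrix.cons_val_two, Matrix.cons_val_zero, Matrix.cons_val_one,
      Matrix.head_cons, Matrix.tail_cons]
    rw [hpd, hpd, ← Finset.sum_sub_distrib, ← hsum 1]
    refine Finset.sum_congr rfl fun d _ => ?_
    rw [← smul_sub, (hcc d).2.1, hone]
  have hcurl2 : pderiv 0 (qp 1) - pderiv 1 (qp 0) = pv 2 := by
    simp only [hqp, Matrix.cons_val_zero, Matrix.cons_val_one, Matrix.head_cons, Matrix.tail_cons]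
    rw [hpd, hpd, ← Finset.sum_sub_distrib, ← hsum 2]
    refine Finset.sum_congr rfl fun d _ => ?_
    rw [← smul_sub, (hcc d).2.2, hone]
  have hqdeg : ∀ i, (qp i).totalDegree ≤ r + 1 := by
    have hterm : ∀ (d : ℕ), d ∈ Finset.range (r + 1) → ∀ (k1 k2 a b : Fin 3),
        (co d • (X k1 * w d a - X k2 * w d b)).totalDegree ≤ r + 1 := by
      intro d hd k1 k2 a b
      simp only [Finset.mem_range] at hd
      have hwle : ∀ j : Fin 3, (w d j).totalDegree ≤ d := fun j =>
        (homogeneousComponent_isHomogeneous d (pv j)).totalDegree_le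
      refine (totalDegree_smul_le _ _).trans ((totalDegree_sub _ _).trans (max_le ?_ ?_)) <;>
      · refine (totalDegree_mul _ _).trans ?_
        rw [totalDegree_X]
        have h1 := hwle a
        have h2 := hwle b
        omega
    intro i
    fin_cases i <;>
      simp only [hqp, Matrix.cons_val_zero, Matrix.cons_val_one, Matrix.cons_val_two,
        Matrix.head_cons, Matrix.tail_cons] <;>
      exact (totalDegree_finset_sum _ _).trans
        (Finset.sup_le fun d hd => hterm d hd _ _ _ _)
  refine ⟨fun x i => eval x (qp i), ?_, ?_⟩
  · intro i
    exact ⟨qp i, Or.inr (by exact_mod_cast hqdeg i), fun x => rfl⟩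
  · intro x
    funext i
    fin_cases i
    · show v x 0 = pcurl _ x 0
      simp only [pcurl, Matrix.cons_val_zero, fderiv_eval]
      rw [← map_sub (eval x), hcurl0]
      exact ((hpv 0).2 x).symm
    · show v x 1 = pcurl _ x 1
      simp only [pcurl, Matrix.cons_val_one, Matrix.head_cons, fderiv_eval]
      rw [← map_sub (eval x), hcurl1]
      exact ((hpv 1).2 x).symm
    · show v x 2 = pcurl _ x 2
      simp only [pcurl, Matrix.cons_val_two, Matrix.tail_cons, Matrix.head_cons, fderiv_eval]
      rw [← map_sub (eval x), hcurl2]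
      exact ((hpv 2).2 x).symm
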